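/- There exists a small constant D > 0 with the following property. Let b₁ = b_{φ₁}, b₂ = b_{φ₂} be rotations in SO(2)/{±I} and x₁, x₂ ∈ [−2, 2]. If 0 < δ < D and the distance from n(−x₁)·b₁^{−1}·b₂·n(x₂) to the group M·A (diagonal subgroup of SL(2,ℂ) times positive diagonal) is at most δ, then the angular distance between b₁ and b₂ is O(δ) and |x₁ − x₂| = O(δ); the implied constants are absolute. -/

import Mathlib

noncomputable section

def Nc (z : ℂ) : Matrix (Fin 2) (Fin 2) ℂ := !![1, z; 0, 1]

/-- The rotation `b_θ` viewed in SL(2,ℂ). -/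
def bC (θ : ℝ) : Matrix (Fin 2) (Fin 2) ℂ :=
  !![(Real.cos (θ/2) : ℂ), (Real.sin (θ/2) : ℂ);
     (-Real.sin (θ/2) : ℝ), (Real.cos (θ/2) : ℂ)]

lemma bC_mul (φ ψ : ℝ) : bC φ * bC ψ = bC (φ + ψ) := by
  ext i j
  fin_cases i <;> fin_cases j <;>
    simp [bC, Matrix.mul_apply, Fin.sum_univ_two] <;>
    rw [show ((φ:ℂ) + ψ)/2 = φ/2 + ψ/2 by ring] <;>
    simp only [Complex.cos_add, Complex.sin_add] <;> ring

lemma bC_zero : bC 0 = 1 := by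
  ext i j
  fin_cases i <;> fin_cases j <;> simp [bC, Matrix.one_fin_two]

lemma bC_inv (φ : ℝ) : (bC φ)⁻¹ = bC (-φ) := by
  apply Matrix.inv_eq_right_inv
  rw [bC_mul, add_neg_cancel, bC_zero]

lemma prod_eq (φ₁ φ₂ x₁ x₂ : ℝ) :
    Nc (-(x₁ : ℂ)) * (bC φ₁)⁻¹ * bC φ₂ * Nc (x₂ : ℂ) =
      !![((Real.cos ((φ₂-φ₁)/2) + x₁ * Real.sin ((φ₂-φ₁)/2) : ℝ) : ℂ),
         (((x₂-x₁) * Real.cos ((φ₂-φ₁)/2) + (x₁*x₂+1) * Real.sin ((φ₂-φ₁)/2) : ℝ) : ℂ);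
         ((-Real.sin ((φ₂-φ₁)/2) : ℝ) : ℂ),
         ((Real.cos ((φ₂-φ₁)/2) - x₂ * Real.sin ((φ₂-φ₁)/2) : ℝ) : ℂ)] := by
  rw [bC_inv, mul_assoc (Nc (-(x₁:ℂ))), bC_mul, show -φ₁ + φ₂ = φ₂ - φ₁ by ring]
  ext i j
  fin_cases i <;> fin_cases j <;>
    simp [Nc, bC, Matrix.mul_apply, Fin.sum_univ_two] <;> ring

lemma abs_comb (a b u v t : ℝ) (ha : |a| ≤ 1) (hb : |b| ≤ 1)
    (hu : |u| ≤ t) (hv : |v| ≤ t) : |a*u + b*v| ≤ 2*t := by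
  calc |a*u + b*v| ≤ |a*u| + |b*v| := abs_add_le _ _
    _ = |a| * |u| + |b| * |v| := by rw [abs_mul, abs_mul]
    _ ≤ 2*t := by nlinarith [abs_nonneg a, abs_nonneg b, abs_nonneg u, abs_nonneg v]

set_option maxHeartbeats 1000000 in
/-- If `n(−x₁)·b₁⁻¹·b₂·n(x₂)` is within `δ` of the torus `M·A = {diag(w, w⁻¹)}`, then the
rotations `b₁, b₂` agree up to sign within `O(δ)` and `|x₁ − x₂| = O(δ)`. -/
theorem stmt_16 :
    ∃ D > 0, ∃ C > 0, ∀ δ φ₁ φ₂ x₁ x₂ : ℝ, 0 < δ → δ < D →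
      x₁ ∈ Set.Icc (-2 : ℝ) 2 → x₂ ∈ Set.Icc (-2 : ℝ) 2 →
      (∃ w : ℂ, w ≠ 0 ∧ ∀ i j : Fin 2, ‖
        ((Nc (-(x₁ : ℂ)) * (bC φ₁)⁻¹ * bC φ₂ * Nc (x₂ : ℂ) - !![w, 0; 0, w⁻¹]) i j)‖ ≤ δ) →
      ((∀ i j : Fin 2, ‖(bC φ₁ - bC φ₂) i j‖ ≤ C * δ) ∨
       (∀ i j : Fin 2, ‖(bC φ₁ + bC φ₂) i j‖ ≤ C * δ)) ∧
      |x₁ - x₂| ≤ C * δ := by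
  refine ⟨1/2, by norm_num, 100, by norm_num, ?_⟩
  intro δ φ₁ φ₂ x₁ x₂ hδ0 hδD hx₁ hx₂ ⟨w, hw0, hw⟩
  rw [prod_eq] at hw
  set s := Real.sin ((φ₂-φ₁)/2) with hs_def
  set c := Real.cos ((φ₂-φ₁)/2) with hc_def
  obtain ⟨hx₁l, hx₁r⟩ := hx₁
  obtain ⟨hx₂l, hx₂r⟩ := hx₂
  have hs : |s| ≤ δ := by
    simpa [Matrix.sub_apply, Complex.norm_real, Real.norm_eq_abs] using hw 1 0
  have h01' : |(x₂-x₁) * c + (x₁*x₂+1) * s| ≤ δ := by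
    rw [← Real.norm_eq_abs, ← Complex.norm_real]
    push_cast
    simpa [Matrix.sub_apply] using hw 0 1
  have hpy : s^2 + c^2 = 1 := Real.sin_sq_add_cos_sq _
  have hc : 1/2 ≤ |c| := by
    nlinarith [sq_abs c, sq_abs s, abs_nonneg c, abs_nonneg s]
  have hssq : |s| * |s| ≤ δ * δ := mul_le_mul hs hs (abs_nonneg s) hδ0.le
  have hcle : c ≤ 1 := Real.cos_le_one _
  have hcge : -1 ≤ c := Real.neg_one_le_cos _
  -- |x₁ - x₂| bound
  have hxx : |x₁ - x₂| ≤ 100 * δ := by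
    have h5 : |x₁*x₂+1| ≤ 5 := by rw [abs_le]; constructor <;> nlinarith
    have h7 : |x₂ - x₁| * |c| ≤ 6 * δ := by
      have h := abs_add_le ((x₂-x₁)*c + (x₁*x₂+1)*s) (-((x₁*x₂+1)*s))
      rw [add_neg_cancel_right, abs_neg, abs_mul, abs_mul] at h
      have h8 := mul_le_mul h5 hs (abs_nonneg s) (by norm_num : (0:ℝ) ≤ 5)
      linarith
    rw [abs_sub_comm]
    nlinarith [abs_nonneg (x₂-x₁), mul_nonneg (abs_nonneg (x₂-x₁)) (by linarith : (0:ℝ) ≤ |c| - 1/2)]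
  refine ⟨?_, hxx⟩
  have hcos2 : Real.cos (φ₂/2) = Real.cos (φ₁/2) * c - Real.sin (φ₁/2) * s := by
    rw [hc_def, hs_def, ← Real.cos_add]; ring_nf
  have hsin2 : Real.sin (φ₂/2) = Real.sin (φ₁/2) * c + Real.cos (φ₁/2) * s := by
    rw [hc_def, hs_def, ← Real.sin_add]; ring_nf
  have hca := Real.abs_cos_le_one (φ₁/2)
  have hsa := Real.abs_sin_le_one (φ₁/2)
  have hsa' : |(-Real.sin (φ₁/2))| ≤ 1 := by rwa [abs_neg]
  have hca' : |(-Real.cos (φ₁/2))| ≤ 1 := by rwa [abs_neg]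
  have keyS : ∀ a b : ℝ, |a - b| ≤ 2*δ → ‖(a:ℂ) - b‖ ≤ 100*δ := by
    intro a b h
    rw [← Complex.ofReal_sub, Complex.norm_real, Real.norm_eq_abs]; linarith
  have keyA : ∀ a b : ℝ, |a + b| ≤ 2*δ → ‖(a:ℂ) + b‖ ≤ 100*δ := by
    intro a b h
    rw [← Complex.ofReal_add, Complex.norm_real, Real.norm_eq_abs]; linarith
  rcases le_or_gt 0 c with hcpos | hcneg
  · -- c ≥ 1/2, difference case
    left
    have hc' : 1/2 ≤ c := by rwa [abs_of_nonneg hcpos] at hc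
    have h1c : |1 - c| ≤ δ := by
      rw [abs_of_nonneg (by linarith)]
      nlinarith [sq_abs s, mul_nonneg hcpos (sub_nonneg.2 hcle)]
    have e1 : |Real.cos (φ₁/2) - Real.cos (φ₂/2)| ≤ 2*δ := by
      rw [show Real.cos (φ₁/2) - Real.cos (φ₂/2)
          = Real.cos (φ₁/2) * (1 - c) + Real.sin (φ₁/2) * s by rw [hcos2]; ring]
      exact abs_comb _ _ _ _ _ hca hsa h1c hs
    have e2 : |Real.sin (φ₁/2) - Real.sin (φ₂/2)| ≤ 2*δ := by
      rw [show Real.sin (φ₁/2) - Real.sin (φ₂/2)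
          = Real.sin (φ₁/2) * (1 - c) + (-Real.cos (φ₁/2)) * s by rw [hsin2]; ring]
      exact abs_comb _ _ _ _ _ hsa hca' h1c hs
    have e2' : |(-Real.sin (φ₁/2)) - (-Real.sin (φ₂/2))| ≤ 2*δ := by
      rw [show -Real.sin (φ₁/2) - -Real.sin (φ₂/2)
          = -(Real.sin (φ₁/2) - Real.sin (φ₂/2)) by ring, abs_neg]
      exact e2
    clear hw h01' hxx hpy hc hssq hcle hcge hcos2 hsin2 hw0
    intro i j
    fin_cases i <;> fin_cases j <;>
      simp only [bC, Matrix.sub_apply, Matrix.cons_val', Matrix.cons_val_zero,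
        Matrix.cons_val_one, Matrix.head_cons, Matrix.empty_val',
        Matrix.cons_val_fin_one, Matrix.head_fin_const]
    · exact keyS _ _ e1
    · exact keyS _ _ e2
    · exact keyS _ _ e2'
    · exact keyS _ _ e1
  · -- c ≤ -1/2, sum case
    right
    have hc' : c ≤ -(1/2) := by
      rcases abs_cases c with ⟨h1, _⟩ | ⟨h1, _⟩ <;> linarith
    have h1c : |1 + c| ≤ δ := by
      rw [abs_of_nonneg (by linarith)]
      nlinarith [sq_abs s, mul_nonneg (by linarith : (0:ℝ) ≤ -c) (by linarith : (0:ℝ) ≤ 1 + c)]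
    have e1 : |Real.cos (φ₁/2) + Real.cos (φ₂/2)| ≤ 2*δ := by
      rw [show Real.cos (φ₁/2) + Real.cos (φ₂/2)
          = Real.cos (φ₁/2) * (1 + c) + (-Real.sin (φ₁/2)) * s by rw [hcos2]; ring]
      exact abs_comb _ _ _ _ _ hca hsa' h1c hs
    have e2 : |Real.sin (φ₁/2) + Real.sin (φ₂/2)| ≤ 2*δ := by
      rw [show Real.sin (φ₁/2) + Real.sin (φ₂/2)
          = Real.sin (φ₁/2) * (1 + c) + Real.cos (φ₁/2) * s by rw [hsin2]; ring]
      exact abs_comb _ _ _ _ _ hsa hca h1c hs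
    have e2' : |(-Real.sin (φ₁/2)) + (-Real.sin (φ₂/2))| ≤ 2*δ := by
      rw [show -Real.sin (φ₁/2) + -Real.sin (φ₂/2)
          = -(Real.sin (φ₁/2) + Real.sin (φ₂/2)) by ring, abs_neg]
      exact e2
    clear hw h01' hxx hpy hc hssq hcle hcge hcos2 hsin2 hw0
    intro i j
    fin_cases i <;> fin_cases j <;>
      simp only [bC, Matrix.add_apply, Matrix.cons_val', Matrix.cons_val_zero,
        Matrix.cons_val_one, Matrix.head_cons, Matrix.empty_val',
        Matrix.cons_val_fin_one, Matrix.head_fin_const]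
    · exact keyA _ _ e1
    · exact keyA _ _ e2
    · exact keyA _ _ e2'
    · exact keyA _ _ e1
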